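/- Let P be a poset and G its incomparability graph. For all elements x ≤ u ≤ v ≤ y in P, we have d_G(u, v) ≤ d_G(x, y). -/

import Mathlib

/-- The incomparability graph of a poset: edges are pairs of incomparable elements. -/
def incompGraph (V : Type*) [PartialOrder V] : SimpleGraph V where
  Adj a b := ¬ a ≤ b ∧ ¬ b ≤ a
  symm := ⟨fun a b h => by exact ⟨h.2, h.1⟩⟩
  loopless := ⟨fun a h => by exact h.1 le_rfl⟩

private lemma incomp_key {V : Type*} [PartialOrder V] :
    ∀ {x y : V} (p : (incompGraph V).Walk x y) (u : V), x ≤ u → u ≤ y →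
      (incompGraph V).edist u y ≤ p.length ∧ (incompGraph V).edist x u ≤ p.length := by
  intro x y p
  induction p with
  | nil =>
    intro u hxu huy
    obtain rfl := le_antisymm huy hxu
    simp
  | @cons a b c h q ih =>
    intro u hxu huy
    simp only [SimpleGraph.Walk.length_cons]
    by_cases hbu : b ≤ u
    · obtain ⟨h1, h2⟩ := ih u hbu huy
      constructor
      · exact le_trans h1 (by push_cast; exact le_self_add.trans (by rw [add_comm]))
      · calc (incompGraph V).edist a u ≤ (incompGraph V).edist a b + (incompGraph V).edist b u :=
              (incompGraph V).edist_triangle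
          _ ≤ 1 + q.length := by
              gcongr
              exact (incompGraph V).edist_le h.toWalk |>.trans (by simp)
          _ = (q.length + 1 : ℕ) := by push_cast; ring
    · by_cases hub : u ≤ b
      · exact absurd (le_trans hxu hub) h.1
      · -- u and b are incomparable, so adjacent
        have hadj : (incompGraph V).Adj u b := ⟨hub, hbu⟩
        constructor
        · calc (incompGraph V).edist u c ≤ (incompGraph V).edist u b + (incompGraph V).edist b c :=
                (incompGraph V).edist_triangle
            _ ≤ 1 + q.length := by
                gcongr
                · exact (incompGraph V).edist_le hadj.toWalk |>.trans (by simp)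
                · exact (incompGraph V).edist_le q
            _ = (q.length + 1 : ℕ) := by push_cast; ring
        · -- q is nonempty since b ≠ c comparable-wise: if q = nil then b = c = y, but u ≤ y and ¬ u ≤ b
          cases q with
          | nil => exact absurd huy hub
          | cons h' q' =>
            have hle : (incompGraph V).edist a u ≤ 2 := by
              have := (incompGraph V).edist_le (SimpleGraph.Walk.cons h (SimpleGraph.Walk.cons hadj.symm SimpleGraph.Walk.nil))
              simpa using this
            refine hle.trans ?_
            simp only [SimpleGraph.Walk.length_cons]
            have : (2 : ℕ∞) = ((2 : ℕ) : ℕ∞) := by norm_cast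
            rw [this]
            exact_mod_cast by omega

theorem stmt8 {V : Type*} [PartialOrder V] (x u v y : V)
    (hxu : x ≤ u) (huv : u ≤ v) (hvy : v ≤ y) :
    (incompGraph V).edist u v ≤ (incompGraph V).edist x y := by
  by_cases hxy : (incompGraph V).edist x y = ⊤
  · rw [hxy]; exact le_top
  · obtain ⟨p, hp⟩ := SimpleGraph.exists_walk_of_edist_ne_top hxy
    have h1 : (incompGraph V).edist u y ≤ (incompGraph V).edist x y := by
      rw [← hp]; exact (incomp_key p u hxu (huv.trans hvy)).1
    by_cases huy : (incompGraph V).edist u y = ⊤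
    · exact absurd (top_le_iff.mp (huy ▸ h1)) hxy
    · obtain ⟨q, hq⟩ := SimpleGraph.exists_walk_of_edist_ne_top huy
      have h2 : (incompGraph V).edist u v ≤ (incompGraph V).edist u y := by
        rw [← hq]; exact (incomp_key q v huv hvy).2
      exact h2.trans h1
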